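/- Let (X,d) be a quasi-metric space whose forward topology is normal (and T₁). If (X,d) is a UC space, then (X,d) is left K-complete, i.e., every left K-Cauchy sequence is forward convergent. -/
import Mathlib


open Filter Topology Set

structure IsQuasiMetric {X : Type*} (d : X → X → ℝ) : Prop where
  nonneg : ∀ x y, 0 ≤ d x y
  refl : ∀ x, d x x = 0
  eq_of_both_zero : ∀ x y, d x y = 0 → d y x = 0 → x = y
  triangle : ∀ x y z, d x y ≤ d x z + d z y

/-- The forward topology generated by forward balls `B⁺(x,ε) = {y | d x y < ε}`. -/
def forwardTopology {X : Type*} (d : X → X → ℝ) : TopologicalSpace X :=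
  TopologicalSpace.generateFrom {S | ∃ x : X, ∃ ε : ℝ, 0 < ε ∧ S = {y | d x y < ε}}

/-- `s` forward converges to `x`: `d x (s n) → 0`. -/
def ForwardConv {X : Type*} (d : X → X → ℝ) (s : ℕ → X) (x : X) : Prop :=
  ∀ ε > (0:ℝ), ∃ N : ℕ, ∀ n ≥ N, d x (s n) < ε

/-- `s` backward converges to `x`: `d (s n) x → 0`. -/
def BackwardConv {X : Type*} (d : X → X → ℝ) (s : ℕ → X) (x : X) : Prop :=
  ∀ ε > (0:ℝ), ∃ N : ℕ, ∀ n ≥ N, d (s n) x < ε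

/-- `x` is a cluster point of `s`: some subsequence forward converges to `x`. -/
def IsClusterPointOf {X : Type*} (d : X → X → ℝ) (s : ℕ → X) (x : X) : Prop :=
  ∃ φ : ℕ → ℕ, StrictMono φ ∧ ForwardConv d (s ∘ φ) x

def LeftKCauchy {X : Type*} (d : X → X → ℝ) (s : ℕ → X) : Prop :=
  ∀ ε > (0:ℝ), ∃ n₀ : ℕ, ∀ k n : ℕ, n₀ ≤ k → k ≤ n → d (s k) (s n) < ε

/-- `s` is forward parallel to `t`. -/
def ForwardParallel {X : Type*} (d : X → X → ℝ) (s t : ℕ → X) : Prop :=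
  ∀ ε > (0:ℝ), ∃ N : ℕ, ∀ n ≥ N, d (s n) (t n) < ε

/-- Forward continuity for real-valued functions (ε-δ form). -/
def ForwardContinuous {X : Type*} (d : X → X → ℝ) (f : X → ℝ) : Prop :=
  ∀ x₀ : X, ∀ ε > (0:ℝ), ∃ δ > (0:ℝ), ∀ y, d x₀ y < δ → |f x₀ - f y| < ε

/-- Uniform continuity for real-valued functions. -/
def UniformlyCont {X : Type*} (d : X → X → ℝ) (f : X → ℝ) : Prop :=
  ∀ ε > (0:ℝ), ∃ δ > (0:ℝ), ∀ x y, d x y < δ → |f x - f y| < ε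

/-- `(X,d)` is a UC quasi-metric space. -/
def IsUC {X : Type*} (d : X → X → ℝ) : Prop :=
  ∀ f : X → ℝ, ForwardContinuous d f → UniformlyCont d f

/-- Distance between two sets: `inf {d a b | a ∈ A, b ∈ B}`. -/
noncomputable def setDist {X : Type*} (d : X → X → ℝ) (A B : Set X) : ℝ :=
  sInf {r : ℝ | ∃ a ∈ A, ∃ b ∈ B, d a b = r}

/-- Forward balls are open in the forward topology. -/
lemma qm_ball_open {X : Type*} (d : X → X → ℝ) (x : X) {ε : ℝ} (hε : 0 < ε) :
    @IsOpen X (forwardTopology d) {y | d x y < ε} :=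
  TopologicalSpace.GenerateOpen.basic _ ⟨x, ε, hε, rfl⟩

/-- Every open set in the forward topology contains a forward ball around each of
its points. -/
lemma qm_ball_sub {X : Type*} (d : X → X → ℝ) (hd : IsQuasiMetric d) {U : Set X}
    (hU : @IsOpen X (forwardTopology d) U) :
    ∀ x ∈ U, ∃ ε > (0:ℝ), {y | d x y < ε} ⊆ U := by
  have hU' : TopologicalSpace.GenerateOpen
      {S | ∃ x : X, ∃ ε : ℝ, 0 < ε ∧ S = {y | d x y < ε}} U := hU
  clear hU
  induction hU' with
  | basic S hS =>
    rintro x hx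
    obtain ⟨a, ε, hε, rfl⟩ := hS
    have hax : d a x < ε := hx
    refine ⟨ε - d a x, by linarith, fun y hy => ?_⟩
    have := hd.triangle a y x
    simp only [Set.mem_setOf_eq] at hy ⊢
    linarith
  | univ => exact fun x _ => ⟨1, one_pos, fun y _ => trivial⟩
  | inter S T _ _ ihS ihT =>
    intro x hx
    obtain ⟨ε1, h1, hs1⟩ := ihS x hx.1
    obtain ⟨ε2, h2, hs2⟩ := ihT x hx.2
    refine ⟨min ε1 ε2, lt_min h1 h2, fun y hy => ?_⟩
    have hy' : d x y < min ε1 ε2 := hy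
    exact ⟨hs1 (show d x y < ε1 from lt_of_lt_of_le hy' (min_le_left _ _)),
      hs2 (show d x y < ε2 from lt_of_lt_of_le hy' (min_le_right _ _))⟩
  | sUnion 𝒮 _ ih =>
    intro x hx
    obtain ⟨S, hS, hxS⟩ := hx
    obtain ⟨ε, hε, hsub⟩ := ih S hS x hxS
    exact ⟨ε, hε, fun y hy => ⟨S, hS, hsub hy⟩⟩

/-- A continuous real function (forward topology) is forward continuous. -/
lemma qm_forwardContinuous {X : Type*} (d : X → X → ℝ) (hd : IsQuasiMetric d)
    (f : X → ℝ) (hf : @Continuous X ℝ (forwardTopology d) _ f) :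
    ForwardContinuous d f := by
  intro x₀ ε hε
  have hop : @IsOpen X (forwardTopology d) (f ⁻¹' Set.Ioo (f x₀ - ε) (f x₀ + ε)) := by
    letI := forwardTopology d
    exact (continuous_def.mp hf) _ isOpen_Ioo
  have hx₀ : x₀ ∈ f ⁻¹' Set.Ioo (f x₀ - ε) (f x₀ + ε) := by
    constructor <;> simp <;> linarith
  obtain ⟨δ, hδ, hsub⟩ := qm_ball_sub d hd hop x₀ hx₀
  refine ⟨δ, hδ, fun y hy => ?_⟩
  have hmem := hsub hy
  simp only [Set.mem_preimage, Set.mem_Ioo] at hmem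
  rw [abs_sub_lt_iff]
  constructor <;> linarith

/-- A left K-Cauchy sequence forward converges to any point `x` such that every
forward ball around `x` contains infinitely many terms of the sequence. -/
lemma qm_conv_of_freq {X : Type*} (d : X → X → ℝ) (hd : IsQuasiMetric d)
    {s : ℕ → X} (hs : LeftKCauchy d s) (x : X)
    (hfreq : ∀ ε > (0:ℝ), {n | d x (s n) < ε}.Infinite) : ForwardConv d s x := by
  intro ε hε
  obtain ⟨n₀, hn₀⟩ := hs (ε/2) (by linarith)
  obtain ⟨k, hk_mem, hk_gt⟩ := (hfreq (ε/2) (by linarith)).exists_gt n₀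
  refine ⟨k, fun n hn => ?_⟩
  have h1 : d x (s k) < ε/2 := hk_mem
  have h2 : d (s k) (s n) < ε/2 := hn₀ k n (le_of_lt hk_gt) hn
  have := hd.triangle x (s n) (s k)
  linarith

/-- Extraction of an injective subsequence when every fiber is finite. -/
lemma qm_exists_inj_subseq {X : Type*} (s : ℕ → X)
    (hfin : ∀ p : X, {n | s n = p}.Finite) :
    ∃ φ : ℕ → ℕ, StrictMono φ ∧ Function.Injective (s ∘ φ) := by
  have key : ∀ N : ℕ, ∃ n, N < n ∧ ∀ m, m ≤ N → s n ≠ s m := by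
    intro N
    have hfin2 : ({n | ∃ m ≤ N, s n = s m} ∪ Set.Iic N).Finite := by
      refine Set.Finite.union (Set.Finite.subset
        (Set.Finite.biUnion (Set.finite_Iic N) (fun m _ => hfin (s m))) ?_)
        (Set.finite_Iic N)
      rintro n ⟨m, hm, hnm⟩
      exact Set.mem_biUnion hm hnm
    obtain ⟨n, hn⟩ := hfin2.infinite_compl.nonempty
    simp only [Set.mem_compl_iff, Set.mem_union, Set.mem_setOf_eq, Set.mem_Iic,
      not_or, not_exists, not_le] at hn
    exact ⟨n, hn.2, fun m hm hsm => hn.1 m ⟨hm, hsm⟩⟩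
  choose g hg1 hg2 using key
  refine ⟨fun n => Nat.rec 0 (fun _ ih => g ih) n, ?_, ?_⟩
  · apply strictMono_nat_of_lt_succ
    intro n
    exact hg1 _
  · set φ : ℕ → ℕ := fun n => Nat.rec 0 (fun _ ih => g ih) n with hφ
    have hmono : StrictMono φ := by
      apply strictMono_nat_of_lt_succ
      intro n
      exact hg1 _
    have hne : ∀ i j, i < j → s (φ j) ≠ s (φ i) := by
      intro i j hij
      obtain ⟨j', rfl⟩ := Nat.exists_eq_add_of_lt hij
      have h1 : φ i ≤ φ (i + j') := hmono.monotone (Nat.le_add_right _ _)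
      have : φ (i + j' + 1) = g (φ (i + j')) := rfl
      rw [this]
      exact hg2 (φ (i + j')) (φ i) h1
    intro i j hij
    by_contra hne'
    rcases lt_trichotomy i j with h | h | h
    · exact hne i j h hij.symm
    · exact hne' h
    · exact hne j i h hij

/-- Ranges of sequences having only finitely many terms near each point are closed. -/
lemma qm_range_closed {X : Type*} (d : X → X → ℝ) (hd : IsQuasiMetric d)
    (hT1 : @T1Space X (forwardTopology d)) (a : ℕ → X)
    (h : ∀ x : X, ∃ ε > (0:ℝ), {n | d x (a n) < ε}.Finite) :
    @IsClosed X (forwardTopology d) (Set.range a) := by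
  letI := forwardTopology d
  rw [← isOpen_compl_iff, isOpen_iff_forall_mem_open]
  intro x hx
  obtain ⟨ε, hε, hF⟩ := h x
  refine ⟨{y | d x y < ε} ∩ ⋂ n ∈ {n | d x (a n) < ε}, {a n}ᶜ, ?_, ?_, ?_, ?_⟩
  · rintro y ⟨hy1, hy2⟩ ⟨m, rfl⟩
    have hm : m ∈ {n | d x (a n) < ε} := hy1
    simp only [Set.mem_iInter, Set.mem_compl_iff, Set.mem_singleton_iff] at hy2
    exact hy2 m hm rfl
  · exact IsOpen.inter (qm_ball_open d x hε)
      (Set.Finite.isOpen_biInter hF (fun n _ => isOpen_compl_singleton))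
  · show d x x < ε
    rw [hd.refl]; exact hε
  · simp only [Set.mem_iInter, Set.mem_compl_iff, Set.mem_singleton_iff]
    intro n _
    exact fun hxa => hx ⟨n, hxa.symm⟩

theorem isUC_leftKComplete {X : Type*} (d : X → X → ℝ) (hd : IsQuasiMetric d)
    (hT1 : @T1Space X (forwardTopology d))
    (hN : @NormalSpace X (forwardTopology d))
    (hUC : IsUC d) :
    ∀ s : ℕ → X, LeftKCauchy d s → ∃ x : X, ForwardConv d s x := by
  intro s hs
  by_contra hnc
  push_neg at hnc
  -- each point has a ball containing only finitely many terms
  have hfin : ∀ x : X, ∃ ε > (0:ℝ), {n | d x (s n) < ε}.Finite := by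
    intro x
    by_contra hc
    push_neg at hc
    exact hnc x (qm_conv_of_freq d hd hs x (fun ε hε => hc ε hε))
  -- fibers are finite
  have hfib : ∀ p : X, {n | s n = p}.Finite := by
    intro p
    obtain ⟨ε, hε, hF⟩ := hfin p
    refine hF.subset ?_
    rintro n (rfl : s n = p)
    show d (s n) (s n) < ε
    rw [hd.refl]; exact hε
  obtain ⟨φ, hφmono, hφinj⟩ := qm_exists_inj_subseq s hfib
  set t : ℕ → X := s ∘ φ with ht
  have hfin_t : ∀ x : X, ∃ ε > (0:ℝ), {n | d x (t n) < ε}.Finite := by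
    intro x
    obtain ⟨ε, hε, hF⟩ := hfin x
    exact ⟨ε, hε, hF.preimage (hφmono.injective.injOn)⟩
  set a : ℕ → X := fun n => t (2 * n) with ha
  set b : ℕ → X := fun n => t (2 * n + 1) with hb
  have hfa : ∀ x : X, ∃ ε > (0:ℝ), {n | d x (a n) < ε}.Finite := by
    intro x
    obtain ⟨ε, hε, hF⟩ := hfin_t x
    have hinj : Function.Injective fun n : ℕ => 2 * n := fun m n h => by
      have h' : 2 * m = 2 * n := h
      omega
    exact ⟨ε, hε, hF.preimage hinj.injOn⟩
  have hfb : ∀ x : X, ∃ ε > (0:ℝ), {n | d x (b n) < ε}.Finite := by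
    intro x
    obtain ⟨ε, hε, hF⟩ := hfin_t x
    have hinj : Function.Injective fun n : ℕ => 2 * n + 1 := fun m n h => by
      have h' : 2 * m + 1 = 2 * n + 1 := h
      omega
    exact ⟨ε, hε, hF.preimage hinj.injOn⟩
  have hA : @IsClosed X (forwardTopology d) (Set.range a) :=
    qm_range_closed d hd hT1 a hfa
  have hB : @IsClosed X (forwardTopology d) (Set.range b) :=
    qm_range_closed d hd hT1 b hfb
  have hdisj : Disjoint (Set.range a) (Set.range b) := by
    rw [Set.disjoint_left]
    rintro y ⟨i, rfl⟩ ⟨j, hj⟩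
    have : 2 * j + 1 = 2 * i := hφinj hj
    omega
  -- Urysohn
  letI := forwardTopology d
  obtain ⟨f, hf0, hf1, _⟩ := exists_continuous_zero_one_of_isClosed hA hB hdisj
  have hfc : ForwardContinuous d f := qm_forwardContinuous d hd f f.continuous
  obtain ⟨δ, hδ, hu⟩ := hUC f hfc 1 one_pos
  obtain ⟨n₀, hn₀⟩ := hs δ hδ
  have hk1 : n₀ ≤ φ (2 * n₀) := le_trans (by omega) (hφmono.le_apply)
  have hk2 : φ (2 * n₀) ≤ φ (2 * n₀ + 1) := hφmono.monotone (by omega)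
  have hdist : d (s (φ (2 * n₀))) (s (φ (2 * n₀ + 1))) < δ := hn₀ _ _ hk1 hk2
  have hval := hu _ _ hdist
  have h0 : f (s (φ (2 * n₀))) = 0 := hf0 ⟨n₀, rfl⟩
  have h1 : f (s (φ (2 * n₀ + 1))) = 1 := hf1 ⟨n₀, rfl⟩
  rw [h0, h1] at hval
  norm_num at hval
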